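/- Let E and A be elliptic curves over a number field K. Then K(E[2]) = K(A[2]) if and only if there exists a G_K-module isomorphism E[2] ≅ A[2]. -/
import Mathlib

set_option synthInstance.maxSize 5000
set_option maxHeartbeats 1000000

namespace Stmt3Aux

abbrev F2 := Fin 2 → ZMod 2
abbrev XX := {v : F2 // v ≠ 0}
abbrev P := Equiv.Perm XX

def x1 : XX := ⟨![1,0], by decide⟩
def x2 : XX := ⟨![0,1], by decide⟩
def pa : P := Equiv.swap x1 x2
def pc : P := Equiv.swap x1 ⟨![1,1], by decide⟩

theorem conj2 : ∀ s t : P, s ≠ 1 → t ≠ 1 → s*s = 1 → t*t = 1 → ∃ σ : P, t = σ*s*σ⁻¹ := by decide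
theorem conj3 : ∀ s t : P, s ≠ 1 → t ≠ 1 → s*s*s = 1 → t*t*t = 1 → ∃ σ : P, t = σ*s*σ⁻¹ := by
  decide
theorem dec1 : ∀ x : P, x = 1 ∨ x = pa ∨ x = pc ∨ x = pa*pc*pa ∨ x = pa*pc ∨ x = pc*pa := by
  decide
theorem dec2 : ∀ a' c' : P, a' ≠ 1 → c' ≠ 1 → a'*a' = 1 → c'*c' = 1 → a' ≠ c' →
    ∃ σ : P, a' = σ*pa*σ⁻¹ ∧ c' = σ*pc*σ⁻¹ := by decide
theorem cardP : Nat.card P = 6 := by rw [Nat.card_eq_fintype_card]; decide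

theorem aut_inner (f : P →* P) (hf : Function.Injective f) :
    ∃ σ : P, ∀ x, f x = σ * x * σ⁻¹ := by
  have hpa : f pa ≠ 1 := fun h => (by decide : pa ≠ (1 : P)) (hf (by simpa using h))
  have hpc : f pc ≠ 1 := fun h => (by decide : pc ≠ (1 : P)) (hf (by simpa using h))
  have hpa2 : f pa * f pa = 1 := by rw [← map_mul, (by decide : pa * pa = (1:P)), map_one]
  have hpc2 : f pc * f pc = 1 := by rw [← map_mul, (by decide : pc * pc = (1:P)), map_one]
  have hne : f pa ≠ f pc := fun h => (by decide : pa ≠ pc) (hf h)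
  obtain ⟨σ, hA, hC⟩ := dec2 (f pa) (f pc) hpa hpc hpa2 hpc2 hne
  refine ⟨σ, fun x => ?_⟩
  rcases dec1 x with h|h|h|h|h|h <;> subst h <;>
    simp only [map_mul, map_one, hA, hC] <;> group

theorem core {Q : Type*} [Group Q] (u v : Q →* P) (hu : Function.Injective u)
    (hv : Function.Injective v) : ∃ σ : P, ∀ q, v q = σ * u q * σ⁻¹ := by
  have : Finite Q := Finite.of_injective u hu
  have hdvd : Nat.card Q ∣ 6 := by
    have h1 := Subgroup.card_subgroup_dvd_card u.range
    rwa [Nat.card_congr (MonoidHom.ofInjective hu).toEquiv.symm, cardP] at h1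
  have hle : Nat.card Q ≤ 6 := Nat.le_of_dvd (by norm_num) hdvd
  have hpos : 0 < Nat.card Q := Nat.card_pos
  have hcases : Nat.card Q = 1 ∨ Nat.card Q = 2 ∨ Nat.card Q = 3 ∨ Nat.card Q = 6 := by
    interval_cases h : Nat.card Q <;> revert hdvd <;> norm_num
  rcases hcases with h|h|h|h
  · refine ⟨1, fun q => ?_⟩
    have hq : ∀ x : Q, x = 1 := fun x => by
      have := pow_card_eq_one' (G := Q) (x := x); rwa [h, pow_one] at this
    rw [hq q]; simp
  · haveI : Fact (Nat.Prime 2) := ⟨by norm_num⟩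
    haveI : IsCyclic Q := isCyclic_of_prime_card h
    obtain ⟨a, ha⟩ := IsCyclic.exists_generator (α := Q)
    have hord : orderOf a = 2 := by rw [orderOf_eq_card_of_forall_mem_zpowers ha, h]
    have ha1 : a ≠ 1 := by intro h1; rw [h1, orderOf_one] at hord; norm_num at hord
    have ha2 : a * a = 1 := by rw [← pow_two, ← hord, pow_orderOf_eq_one]
    obtain ⟨σ, hσ⟩ := conj2 (u a) (v a)
      (fun h1 => ha1 (hu (by simpa using h1))) (fun h1 => ha1 (hv (by simpa using h1)))
      (by rw [← map_mul, ha2, map_one]) (by rw [← map_mul, ha2, map_one])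
    refine ⟨σ, fun q => ?_⟩
    obtain ⟨k, rfl⟩ := Subgroup.mem_zpowers_iff.mp (ha q)
    rw [map_zpow, map_zpow, hσ, conj_zpow]
  · haveI : Fact (Nat.Prime 3) := ⟨by norm_num⟩
    haveI : IsCyclic Q := isCyclic_of_prime_card h
    obtain ⟨a, ha⟩ := IsCyclic.exists_generator (α := Q)
    have hord : orderOf a = 3 := by rw [orderOf_eq_card_of_forall_mem_zpowers ha, h]
    have ha1 : a ≠ 1 := by intro h1; rw [h1, orderOf_one] at hord; norm_num at hord
    have ha3 : a * a * a = 1 := by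
      have h3 := pow_orderOf_eq_one a; rw [hord] at h3
      rw [← h3, pow_succ, pow_two]
    obtain ⟨σ, hσ⟩ := conj3 (u a) (v a)
      (fun h1 => ha1 (hu (by simpa using h1))) (fun h1 => ha1 (hv (by simpa using h1)))
      (by rw [← map_mul, ← map_mul, ha3, map_one])
      (by rw [← map_mul, ← map_mul, ha3, map_one])
    refine ⟨σ, fun q => ?_⟩
    obtain ⟨k, rfl⟩ := Subgroup.mem_zpowers_iff.mp (ha q)
    rw [map_zpow, map_zpow, hσ, conj_zpow]
  · haveI : Fintype Q := Fintype.ofFinite Q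
    have hbij : Function.Bijective u := by
      rw [Fintype.bijective_iff_injective_and_card]
      exact ⟨hu, by rw [← Nat.card_eq_fintype_card, ← Nat.card_eq_fintype_card, h, cardP]⟩
    let eu := MulEquiv.ofBijective u hbij
    obtain ⟨σ, hσ⟩ := aut_inner (v.comp eu.symm.toMonoidHom) (hv.comp eu.symm.injective)
    refine ⟨σ, fun q => ?_⟩
    have h2 := hσ (u q)
    have h3 : eu.symm (u q) = q := (MulEquiv.symm_apply_eq eu).mpr rfl
    simpa [h3] using h2

/-! Extension of a permutation of nonzero vectors to a linear automorphism. -/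

def Lfun (σ : P) : F2 → F2 := fun v => if h : v = 0 then 0 else (σ ⟨v, h⟩ : F2)

theorem Ladd : ∀ (σ : P) (u v : F2), Lfun σ (u + v) = Lfun σ u + Lfun σ v := by decide
theorem Lsmul : ∀ (σ : P) (c : ZMod 2) (v : F2), Lfun σ (c • v) = c • Lfun σ v := by decide
theorem Lbij : ∀ σ : P, Function.Bijective (Lfun σ) := by decide
theorem Lval : ∀ (σ : P) (x : XX), Lfun σ (x : F2) = (σ x : F2) := by decide

noncomputable def Lequiv (σ : P) : F2 ≃ₗ[ZMod 2] F2 :=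
  { Equiv.ofBijective _ (Lbij σ) with
    map_add' := Ladd σ
    map_smul' := Lsmul σ }

theorem Lequiv_val (σ : P) (x : XX) : Lequiv σ (x : F2) = (σ x : F2) := Lval σ x

/-! Restriction of linear automorphisms to permutations of nonzero vectors. -/

def rmap (f : F2 ≃ₗ[ZMod 2] F2) : P where
  toFun x := ⟨f x, fun h => x.2 (by simpa using h)⟩
  invFun x := ⟨f.symm x, fun h => x.2 (by simpa using h)⟩
  left_inv x := by ext : 1; simp
  right_inv x := by ext : 1; simp

def restrict : (F2 ≃ₗ[ZMod 2] F2) →* P where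
  toFun := rmap
  map_one' := by ext x : 2; rfl
  map_mul' f g := by ext x : 2; rfl

theorem restrict_eq_one {f : F2 ≃ₗ[ZMod 2] F2} (h : restrict f = 1) : f = 1 := by
  refine LinearEquiv.ext fun v => ?_
  by_cases hv : v = 0
  · subst hv; simp
  · have := congrArg (fun p => ((p ⟨v, hv⟩ : XX) : F2)) h
    simpa [restrict, rmap] using this

/-! Transfer of the representation along a linear equivalence with `F2`. -/

variable {V : Type*} [AddCommGroup V] [Module (ZMod 2) V]

theorem mul_apply' (f g : V ≃ₗ[ZMod 2] V) (x : V) : (f * g) x = f (g x) := rfl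

def tau (e : V ≃ₗ[ZMod 2] F2) : (V ≃ₗ[ZMod 2] V) →* (F2 ≃ₗ[ZMod 2] F2) where
  toFun f := (e.symm.trans f).trans e
  map_one' := by refine LinearEquiv.ext fun v => ?_; simp
  map_mul' f g := by
    refine LinearEquiv.ext fun v => ?_
    simp [mul_apply', LinearEquiv.trans_apply]

theorem tau_eq_one (e : V ≃ₗ[ZMod 2] F2) {f : V ≃ₗ[ZMod 2] V} (h : tau e f = 1) : f = 1 := by
  refine LinearEquiv.ext fun v => ?_
  have h2 := DFunLike.congr_fun h (e v)
  simp only [tau, MonoidHom.coe_mk, OneHom.coe_mk, LinearEquiv.trans_apply,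
    LinearEquiv.symm_apply_apply] at h2
  simpa using e.injective (by simpa using h2)

theorem tau_apply (e : V ≃ₗ[ZMod 2] F2) (f : V ≃ₗ[ZMod 2] V) (x : V) :
    tau e f (e x) = e (f x) := by
  simp [tau, LinearEquiv.trans_apply]

variable {G : Type*} [Group G]

def alpha (e : V ≃ₗ[ZMod 2] F2) (ρ : G →* (V ≃ₗ[ZMod 2] V)) : G →* P :=
  restrict.comp ((tau e).comp ρ)

theorem alpha_eq_one_iff (e : V ≃ₗ[ZMod 2] F2) (ρ : G →* (V ≃ₗ[ZMod 2] V)) (g : G) :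
    alpha e ρ g = 1 ↔ ρ g = 1 := by
  constructor
  · intro h
    exact tau_eq_one e (restrict_eq_one h)
  · intro h
    simp [alpha, h]

theorem alpha_coe (e : V ≃ₗ[ZMod 2] F2) (ρ : G →* (V ≃ₗ[ZMod 2] V)) (g : G) (x : XX) :
    ((alpha e ρ g x : XX) : F2) = tau e (ρ g) (x : F2) := rfl

end Stmt3Aux

open Stmt3Aux in
/-- Let `E` and `A` be elliptic curves over a number field `K`.
Then `K(E[2]) = K(A[2])` if and only if there is a `G_K`-module isomorphism
`E[2] ≅ A[2]`.  Abstract formalization: `G` plays the role of `G_K`, and the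
2-torsion modules `E[2]`, `A[2]` are 2-dimensional `F₂`-vector spaces `V`, `W` with
`G` acting through representations `ρV`, `ρW` (by linear automorphisms, as Galois
acts on torsion points).  The equality of division fields `K(E[2]) = K(A[2])` means
exactly that the kernels of the two representations coincide (each division field is
the fixed field of the corresponding kernel); the right-hand side is the existence of
a `G`-equivariant `F₂`-linear isomorphism `V ≃ W`. -/
theorem stmt3 {G V W : Type*} [Group G] [AddCommGroup V] [AddCommGroup W]
    [Module (ZMod 2) V] [Module (ZMod 2) W]
    (hV : Module.finrank (ZMod 2) V = 2) (hW : Module.finrank (ZMod 2) W = 2)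
    (ρV : G →* (V ≃ₗ[ZMod 2] V)) (ρW : G →* (W ≃ₗ[ZMod 2] W)) :
    ρV.ker = ρW.ker ↔
      ∃ e : V ≃ₗ[ZMod 2] W, ∀ (g : G) (v : V), e (ρV g v) = ρW g (e v) := by
  constructor
  · intro hker
    haveI : Module.Finite (ZMod 2) V := Module.finite_of_finrank_eq_succ (n := 1) (by omega)
    haveI : Module.Finite (ZMod 2) W := Module.finite_of_finrank_eq_succ (n := 1) (by omega)
    have hF2 : Module.finrank (ZMod 2) F2 = 2 := by simp [Module.finrank_pi]
    let eV : V ≃ₗ[ZMod 2] F2 := LinearEquiv.ofFinrankEq _ _ (by rw [hV, hF2])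
    let eW : W ≃ₗ[ZMod 2] F2 := LinearEquiv.ofFinrankEq _ _ (by rw [hW, hF2])
    have hkerα : (alpha eV ρV).ker = (alpha eW ρW).ker := by
      ext g
      rw [MonoidHom.mem_ker, MonoidHom.mem_ker, alpha_eq_one_iff, alpha_eq_one_iff,
        ← MonoidHom.mem_ker, ← MonoidHom.mem_ker, hker]
    have hle : (alpha eV ρV).ker ≤ (alpha eW ρW).ker := hkerα.le
    have hu : Function.Injective (QuotientGroup.kerLift (alpha eV ρV)) :=
      QuotientGroup.kerLift_injective _
    have hv : Function.Injective (QuotientGroup.lift (alpha eV ρV).ker (alpha eW ρW) hle) := by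
      rw [injective_iff_map_eq_one]
      intro q hq
      induction q using QuotientGroup.induction_on with
      | _ g =>
        rw [QuotientGroup.lift_mk] at hq
        rw [QuotientGroup.eq_one_iff]
        rw [hkerα]
        exact MonoidHom.mem_ker.mpr hq
    obtain ⟨σ, hσ⟩ := core _ _ hu hv
    have hσ' : ∀ g : G, alpha eW ρW g = σ * alpha eV ρV g * σ⁻¹ := by
      intro g
      have := hσ (QuotientGroup.mk g)
      rwa [QuotientGroup.lift_mk, QuotientGroup.kerLift_mk] at this
    refine ⟨eV.trans ((Lequiv σ).trans eW.symm), fun g x => ?_⟩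
    have key : ∀ w : F2, Lequiv σ (tau eV (ρV g) w) = tau eW (ρW g) (Lequiv σ w) := by
      intro w
      by_cases hw : w = 0
      · subst hw; simp
      · have h1 : tau eV (ρV g) w = ((alpha eV ρV g ⟨w, hw⟩ : XX) : F2) := rfl
        have h2 : Lequiv σ w = ((σ ⟨w, hw⟩ : XX) : F2) := Lequiv_val σ ⟨w, hw⟩
        have h3 : tau eW (ρW g) ((σ ⟨w, hw⟩ : XX) : F2)
            = ((alpha eW ρW g (σ ⟨w, hw⟩) : XX) : F2) := rfl
        rw [h1, Lequiv_val σ _, h2, h3, hσ' g]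
        simp [Equiv.Perm.mul_apply]
    have hVstep : eV (ρV g x) = tau eV (ρV g) (eV x) := (tau_apply eV (ρV g) x).symm
    have hWstep : ∀ y : F2, eW.symm (tau eW (ρW g) y) = ρW g (eW.symm y) := by
      intro y
      have := tau_apply eW (ρW g) (eW.symm y)
      rw [LinearEquiv.apply_symm_apply] at this
      rw [this, LinearEquiv.symm_apply_apply]
    simp only [LinearEquiv.trans_apply]
    rw [hVstep, key, hWstep]
  · rintro ⟨e, he⟩
    ext g
    rw [MonoidHom.mem_ker, MonoidHom.mem_ker]
    constructor
    · intro h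
      refine LinearEquiv.ext fun w => ?_
      have := he g (e.symm w)
      rw [h] at this
      simpa using this.symm
    · intro h
      refine LinearEquiv.ext fun v => ?_
      have := he g v
      rw [h] at this
      simpa using e.injective (by simpa using this)
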